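/- Smoothing bound for sequentially projected ensembles: let {p(x), φ_x}_{x ∈ 𝒳} be a finite ensemble of d × d density matrices with average state φ̄ = Σ_x p(x) φ_x, let {Λ_x}_{x ∈ 𝒳} be orthogonal projections satisfying Σ_x p(x) Tr{Λ_x φ_x} ≥ 1 − ε, and let Π be an orthogonal projection satisfying Tr{Π φ̄} ≥ 1 − ε, for some ε ∈ [0,1]. Then Σ_x p(x) Tr{Π Λ_x φ_x Λ_x Π} ≥ 1 − 2ε − 2√ε. -/

import Mathlib

open scoped ComplexOrder

noncomputable section

namespace SmoothingAuxQI
open Matrix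
variable {d : ℕ}

lemma diag_nonneg {A : Matrix (Fin d) (Fin d) ℂ} (hA : A.PosSemidef) (i : Fin d) :
    0 ≤ A i i := by
  exact hA.diag_nonneg

lemma trace_nonneg' {A : Matrix (Fin d) (Fin d) ℂ} (hA : A.PosSemidef) : 0 ≤ A.trace :=
  Finset.sum_nonneg fun i _ => diag_nonneg hA i

lemma one_sub_herm {P : Matrix (Fin d) (Fin d) ℂ} (hP : P.IsHermitian) :
    (1 - P).IsHermitian := (Matrix.isHermitian_one).sub hP

lemma one_sub_idem {P : Matrix (Fin d) (Fin d) ℂ} (hP2 : P * P = P) :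
    (1 - P) * (1 - P) = 1 - P := by
  simp [mul_sub, sub_mul, hP2]

lemma trace_proj_eq {P M : Matrix (Fin d) (Fin d) ℂ} (hP2 : P * P = P) :
    (P * M * P).trace = (P * M).trace := by
  rw [Matrix.trace_mul_comm (P * M) P, ← mul_assoc, hP2]

lemma trace_proj_nonneg {P M : Matrix (Fin d) (Fin d) ℂ} (hP : P.IsHermitian)
    (hP2 : P * P = P) (hM : M.PosSemidef) : 0 ≤ (P * M).trace := by
  have h1 : (P * M * Pᴴ).PosSemidef := hM.mul_mul_conjTranspose_same P
  rw [hP.eq] at h1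
  have := trace_nonneg' h1
  rwa [trace_proj_eq hP2] at this

lemma trace_proj_le {P M : Matrix (Fin d) (Fin d) ℂ} (hP : P.IsHermitian)
    (hP2 : P * P = P) (hM : M.PosSemidef) : (P * M).trace ≤ M.trace := by
  have h := trace_proj_nonneg (one_sub_herm hP) (one_sub_idem hP2) hM
  rw [sub_mul, one_mul, Matrix.trace_sub] at h
  have := sub_nonneg.mp h
  exact this

lemma trace_mul_self_conj (A : Matrix (Fin d) (Fin d) ℂ) :
    (A * Aᴴ).trace.re = ∑ k : Fin d × Fin d, ‖A k.1 k.2‖ ^ 2 := by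
  have : (A * Aᴴ).trace = ∑ k : Fin d × Fin d, (‖A k.1 k.2‖ ^ 2 : ℂ) := by
    rw [Matrix.trace, Fintype.sum_prod_type]
    congr 1; ext i
    simp [Matrix.mul_apply, Matrix.conjTranspose_apply, Complex.mul_conj', Complex.mul_conj,
      Complex.normSq_eq_norm_sq, Complex.sq_norm]
  rw [this, Complex.re_sum]
  simp [← Complex.ofReal_pow]

lemma trace_conj_mul_self (B : Matrix (Fin d) (Fin d) ℂ) :
    (Bᴴ * B).trace.re = ∑ k : Fin d × Fin d, ‖B k.2 k.1‖ ^ 2 := by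
  have : (Bᴴ * B).trace = ∑ k : Fin d × Fin d, (‖B k.2 k.1‖ ^ 2 : ℂ) := by
    rw [Matrix.trace, Fintype.sum_prod_type]
    congr 1; ext j
    simp [Matrix.mul_apply, Matrix.conjTranspose_apply, Complex.mul_conj', Complex.mul_conj,
      Complex.normSq_eq_norm_sq, Complex.sq_norm, mul_comm]
  rw [this, Complex.re_sum]
  simp [← Complex.ofReal_pow]

lemma trace_cs (A B : Matrix (Fin d) (Fin d) ℂ) :
    ‖(A * B).trace‖ ≤ Real.sqrt ((A * Aᴴ).trace.re) * Real.sqrt ((Bᴴ * B).trace.re) := by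
  let u : EuclideanSpace ℂ (Fin d × Fin d) := WithLp.toLp 2 (fun k : Fin d × Fin d => star (A k.1 k.2))
  let v : EuclideanSpace ℂ (Fin d × Fin d) := WithLp.toLp 2 (fun k : Fin d × Fin d => B k.2 k.1)
  have hinner : (inner ℂ u v : ℂ) = (A * B).trace := by
    rw [PiLp.inner_apply, Matrix.trace, Fintype.sum_prod_type]
    congr 1; ext i
    simp [u, v, Matrix.mul_apply, RCLike.inner_apply, mul_comm]
  have hu : ‖u‖ = Real.sqrt ((A * Aᴴ).trace.re) := by
    rw [EuclideanSpace.norm_eq, trace_mul_self_conj]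
    congr 1
    exact Finset.sum_congr rfl fun k _ => by simp [u]
  have hv : ‖v‖ = Real.sqrt ((Bᴴ * B).trace.re) := by
    rw [EuclideanSpace.norm_eq, trace_conj_mul_self]
  calc ‖(A * B).trace‖ = ‖(inner ℂ u v : ℂ)‖ := by rw [hinner]
    _ ≤ ‖u‖ * ‖v‖ := norm_inner_le_norm u v
    _ = _ := by rw [hu, hv]

lemma re_le_norm (z : ℂ) : z.re ≤ ‖z‖ := by
  exact Complex.re_le_norm z

open scoped MatrixOrder in
lemma key {φ L P : Matrix (Fin d) (Fin d) ℂ} (hφ : φ.PosSemidef) (htr : φ.trace = 1)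
    (hL : L.IsHermitian) (hL2 : L * L = L) (hP : P.IsHermitian) (hP2 : P * P = P) :
    (L * φ).trace.re - (1 - (P * φ).trace.re)
      - 2 * Real.sqrt (1 - (L * φ).trace.re) ≤ (P * L * φ * L * P).trace.re := by
  have hS : (CFC.sqrt φ).PosSemidef := (CFC.sqrt_nonneg φ).posSemidef
  set S := CFC.sqrt φ with hSdef
  have hSS : S * S = φ := CFC.sqrt_mul_sqrt_self φ hφ.nonneg
  have hSh : Sᴴ = S := hS.1
  set Q : Matrix (Fin d) (Fin d) ℂ := 1 - P with hQdef
  have hQ : Q.IsHermitian := one_sub_herm hP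
  have hQ2 : Q * Q = Q := one_sub_idem hP2
  have hL1 : (L - 1).IsHermitian := hL.sub Matrix.isHermitian_one
  set a : ℝ := (L * φ).trace.re with ha
  set t : ℝ := 1 - a with htdef
  -- PSD facts
  have hLφL_psd : (L * φ * L).PosSemidef := by
    have := hφ.mul_mul_conjTranspose_same L; rwa [hL.eq] at this
  have hL1φL1_psd : ((L - 1) * φ * (L - 1)).PosSemidef := by
    have := hφ.mul_mul_conjTranspose_same (L - 1); rwa [hL1.eq] at this
  -- traces
  have htrLφL : (L * φ * L).trace = (L * φ).trace := trace_proj_eq hL2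
  have ha_le : a ≤ 1 := by
    have h := trace_proj_le hL hL2 hφ
    rw [htr] at h
    simpa [ha] using (Complex.le_def.mp h).1
  have ha_ge : 0 ≤ a := by
    have h := trace_proj_nonneg hL hL2 hφ
    simpa [ha] using (Complex.le_def.mp h).1
  have ht0 : 0 ≤ t := by rw [htdef]; linarith
  have htrL1 : ((L - 1) * φ * (L - 1)).trace.re = t := by
    have h1 : ((L - 1) * φ * (L - 1)).trace = ((L - 1) * (L - 1) * φ).trace := by
      rw [Matrix.trace_mul_comm ((L - 1) * φ) (L - 1), ← mul_assoc]
    have h2 : (L - 1) * (L - 1) = 1 - L := by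
      simp only [sub_mul, mul_sub, hL2, one_mul, mul_one]; abel
    rw [h1, h2, sub_mul, one_mul, Matrix.trace_sub, htr]
    simp [htdef, ha]
  -- sandwich of L-1 sandwich by Q
  have hQL1 : (Q * ((L - 1) * φ * (L - 1))).trace.re ≤ t := by
    have h := (Complex.le_def.mp (trace_proj_le hQ hQ2 hL1φL1_psd)).1
    rw [htrL1] at h; exact h
  have hQL1' : 0 ≤ (Q * ((L - 1) * φ * (L - 1))).trace.re :=
    (Complex.le_def.mp (trace_proj_nonneg hQ hQ2 hL1φL1_psd)).1
  have hQLφL_le : (Q * (L * φ * L)).trace.re ≤ 1 := by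
    have h := (Complex.le_def.mp (trace_proj_le hQ hQ2 hLφL_psd)).1
    rw [htrLφL] at h; linarith
  have hQLφL_ge : 0 ≤ (Q * (L * φ * L)).trace.re :=
    (Complex.le_def.mp (trace_proj_nonneg hQ hQ2 hLφL_psd)).1
  -- CS bound for term 1
  have hterm1 : (Q * (L * φ * (L - 1))).trace.re ≤ Real.sqrt t := by
    have hfact : Q * L * S * (S * (L - 1)) = Q * (L * φ * (L - 1)) := by
      rw [← hSS]; noncomm_ring
    have he1 : (Q * L * S) * (Q * L * S)ᴴ = Q * (L * φ * L) * Q := by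
      simp only [Matrix.conjTranspose_mul, hSh, hL.eq, hQ.eq]
      rw [← hSS]; noncomm_ring
    have he2 : (S * (L - 1))ᴴ * (S * (L - 1)) = (L - 1) * φ * (L - 1) := by
      simp only [Matrix.conjTranspose_mul, hSh, hL1.eq]
      rw [← hSS]; noncomm_ring
    have hcs := trace_cs (Q * L * S) (S * (L - 1))
    rw [hfact, he1, he2] at hcs
    have h1 : ((Q * (L * φ * L) * Q).trace).re ≤ 1 := by
      rw [trace_proj_eq hQ2]; exact hQLφL_le
    have h1' : 0 ≤ ((Q * (L * φ * L) * Q).trace).re := by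
      rw [trace_proj_eq hQ2]; exact hQLφL_ge
    calc (Q * (L * φ * (L - 1))).trace.re ≤ ‖(Q * (L * φ * (L - 1))).trace‖ := re_le_norm _
      _ ≤ Real.sqrt ((Q * (L * φ * L) * Q).trace.re)
            * Real.sqrt (((L - 1) * φ * (L - 1)).trace.re) := hcs
      _ ≤ 1 * Real.sqrt t := by
          rw [htrL1]
          gcongr
          calc Real.sqrt ((Q * (L * φ * L) * Q).trace.re) ≤ Real.sqrt 1 :=
                Real.sqrt_le_sqrt h1
            _ = 1 := Real.sqrt_one
      _ = Real.sqrt t := one_mul _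
  -- CS bound for term 2
  have hterm2 : (Q * ((L - 1) * φ)).trace.re ≤ Real.sqrt t := by
    have hfact : Q * (L - 1) * S * S = Q * ((L - 1) * φ) := by
      rw [← hSS]; noncomm_ring
    have he1 : (Q * (L - 1) * S) * (Q * (L - 1) * S)ᴴ = Q * ((L - 1) * φ * (L - 1)) * Q := by
      simp only [Matrix.conjTranspose_mul, hSh, hL1.eq, hQ.eq]
      rw [← hSS]; noncomm_ring
    have he2 : Sᴴ * S = φ := by rw [hSh, hSS]
    have hcs := trace_cs (Q * (L - 1) * S) S
    rw [hfact, he1, he2, htr] at hcs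
    have h1 : ((Q * ((L - 1) * φ * (L - 1)) * Q).trace).re ≤ t := by
      rw [trace_proj_eq hQ2]; exact hQL1
    calc (Q * ((L - 1) * φ)).trace.re ≤ ‖(Q * ((L - 1) * φ)).trace‖ := re_le_norm _
      _ ≤ Real.sqrt ((Q * ((L - 1) * φ * (L - 1)) * Q).trace.re) * Real.sqrt (1 : ℂ).re := hcs
      _ ≤ Real.sqrt t * 1 := by
          have : Real.sqrt (1 : ℂ).re = 1 := by simp
          rw [this]
          gcongr
      _ = Real.sqrt t := mul_one _
  -- decomposition
  have hdecomp : Q * (L * φ * L) = Q * φ + Q * (L * φ * (L - 1)) + Q * ((L - 1) * φ) := by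
    noncomm_ring
  have hQφ : (Q * φ).trace.re = 1 - (P * φ).trace.re := by
    rw [hQdef, sub_mul, one_mul, Matrix.trace_sub, htr]
    simp
  have hsum : (Q * (L * φ * L)).trace.re ≤ (1 - (P * φ).trace.re) + 2 * Real.sqrt t := by
    rw [hdecomp]
    simp only [Matrix.trace_add, Complex.add_re]
    rw [hQφ]
    linarith
  -- conclude
  have hgoal : (P * L * φ * L * P).trace = (L * φ).trace - (Q * (L * φ * L)).trace := by
    have h1 : P * L * φ * L * P = P * (L * φ * L) * P := by noncomm_ring
    rw [h1, trace_proj_eq hP2, hQdef, sub_mul, one_mul, Matrix.trace_sub, htrLφL]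
    abel
  rw [hgoal, Complex.sub_re]
  rw [← ha, ← htdef] at *
  linarith

end SmoothingAuxQI

open SmoothingAuxQI in
/-- **Smoothing bound for sequentially projected ensembles**: if `{p(x), φ_x}` is an
ensemble of density matrices with average state `φ̄`, `{Λ_x}` are projections with
`Σ_x p(x) Tr{Λ_x φ_x} ≥ 1 − ε`, and `Π` is a projection with `Tr{Π φ̄} ≥ 1 − ε`, then
`Σ_x p(x) Tr{Π Λ_x φ_x Λ_x Π} ≥ 1 − 2ε − 2√ε`. -/
theorem smoothing_bound {𝒳 : Type*} [Fintype 𝒳] {d : ℕ}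
    (p : 𝒳 → ℝ) (hp : ∀ x, 0 ≤ p x) (hp1 : ∑ x, p x = 1)
    (φ : 𝒳 → Matrix (Fin d) (Fin d) ℂ)
    (hφ : ∀ x, (φ x).PosSemidef) (hφtr : ∀ x, (φ x).trace = 1)
    (Λ : 𝒳 → Matrix (Fin d) (Fin d) ℂ)
    (hΛ : ∀ x, (Λ x).IsHermitian) (hΛ2 : ∀ x, Λ x * Λ x = Λ x)
    (Pr : Matrix (Fin d) (Fin d) ℂ)
    (hPr : Pr.IsHermitian) (hPr2 : Pr * Pr = Pr)
    (ε : ℝ) (hε0 : 0 ≤ ε) (hε1 : ε ≤ 1)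
    (hgood : 1 - ε ≤ ∑ x, p x * ((Λ x * φ x).trace).re)
    (havg : 1 - ε ≤ ((Pr * ∑ x, (p x : ℂ) • φ x).trace).re) :
    1 - 2 * ε - 2 * Real.sqrt ε ≤
      ∑ x, p x * ((Pr * Λ x * φ x * Λ x * Pr).trace).re := by
  set a : 𝒳 → ℝ := fun x => ((Λ x * φ x).trace).re with hadef
  set b : 𝒳 → ℝ := fun x => ((Pr * φ x).trace).re with hbdef
  set t : 𝒳 → ℝ := fun x => 1 - a x with htdef
  have ha_le : ∀ x, a x ≤ 1 := by
    intro x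
    have h := trace_proj_le (hΛ x) (hΛ2 x) (hφ x)
    rw [hφtr x] at h
    simpa [hadef] using (Complex.le_def.mp h).1
  have ht0 : ∀ x, 0 ≤ t x := fun x => by simp only [htdef]; linarith [ha_le x]
  -- rewrite havg
  have havg' : 1 - ε ≤ ∑ x, p x * b x := by
    have h : (Pr * ∑ x, (p x : ℂ) • φ x).trace = ∑ x, (p x : ℂ) * (Pr * φ x).trace := by
      rw [Matrix.mul_sum, Matrix.trace_sum]
      exact Finset.sum_congr rfl fun x _ => by rw [Matrix.mul_smul, Matrix.trace_smul]; rfl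
    rw [h, Complex.re_sum] at havg
    convert havg using 2 with x
    simp [hbdef, Complex.mul_re]
  -- concavity: ∑ p √t ≤ √ε
  have hsumt : ∑ x, p x * t x ≤ ε := by
    have : ∑ x, p x * t x = 1 - ∑ x, p x * a x := by
      simp only [htdef, mul_sub, mul_one, Finset.sum_sub_distrib, hp1]
    rw [this]; linarith
  have hsumt0 : 0 ≤ ∑ x, p x * t x :=
    Finset.sum_nonneg fun x _ => mul_nonneg (hp x) (ht0 x)
  have hsqrt : ∑ x, p x * Real.sqrt (t x) ≤ Real.sqrt ε := by
    have hcs := Finset.sum_sq_le_sum_mul_sum_of_sq_eq_mul Finset.univ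
      (r := fun x => p x * Real.sqrt (t x)) (f := p) (g := fun x => p x * t x)
      (fun x _ => hp x) (fun x _ => mul_nonneg (hp x) (ht0 x))
      (fun x _ => by rw [mul_pow, Real.sq_sqrt (ht0 x)]; ring)
    rw [hp1, one_mul] at hcs
    have h0 : 0 ≤ ∑ x, p x * Real.sqrt (t x) :=
      Finset.sum_nonneg fun x _ => mul_nonneg (hp x) (Real.sqrt_nonneg _)
    have : (∑ x, p x * Real.sqrt (t x)) ^ 2 ≤ ε := le_trans hcs hsumt
    calc ∑ x, p x * Real.sqrt (t x)
        = Real.sqrt ((∑ x, p x * Real.sqrt (t x)) ^ 2) := (Real.sqrt_sq h0).symm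
      _ ≤ Real.sqrt ε := Real.sqrt_le_sqrt this
  -- per-term bound and sum
  have hterm : ∀ x, p x * (a x - (1 - b x) - 2 * Real.sqrt (t x))
      ≤ p x * ((Pr * Λ x * φ x * Λ x * Pr).trace).re := fun x =>
    mul_le_mul_of_nonneg_left
      (key (hφ x) (hφtr x) (hΛ x) (hΛ2 x) hPr hPr2) (hp x)
  calc 1 - 2 * ε - 2 * Real.sqrt ε
      ≤ ∑ x, p x * (a x - (1 - b x) - 2 * Real.sqrt (t x)) := by
        have expand : ∀ x, p x * (a x - (1 - b x) - 2 * Real.sqrt (t x))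
            = (p x * a x + p x * b x - p x) - 2 * (p x * Real.sqrt (t x)) := fun x => by ring
        rw [Finset.sum_congr rfl fun x _ => expand x]
        rw [Finset.sum_sub_distrib, Finset.sum_sub_distrib, Finset.sum_add_distrib,
          ← Finset.mul_sum, hp1]
        linarith
    _ ≤ ∑ x, p x * ((Pr * Λ x * φ x * Λ x * Pr).trace).re :=
        Finset.sum_le_sum fun x _ => hterm x
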